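/- Let r, s, t, k, l be integers with r² + s² = t², 2kl = rs, and t + k + l even, and set a = (t + k + l)/2, b = (t + k − l)/2, c = (t − k + l)/2, d = (t − k − l)/2. Then t + r + s and t + r − s are even, the matrix with rows (a, b), (c, d) has eigenvalues (t + r + s)/2 and (t − r − s)/2, and the matrix with rows (b, a), (d, c) has eigenvalues (t + r − s)/2 and (t − r + s)/2. In particular these eigenvalues are independent of the choice of k and l. -/
import Mathlib


/-- For the general solution generated by a Pythagorean triple (r,s,t) via
2kl = rs, the matrices (a b; c d) and (b a; d c) have eigenvalues
(t ± (r+s))/2 and (t ± (r−s))/2 respectively, independently of k and l. -/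
theorem stmt_15 (r s t k l a b c d : ℤ) (hpy : r ^ 2 + s ^ 2 = t ^ 2)
    (hkl : 2 * k * l = r * s)
    (ha : 2 * a = t + k + l) (hb : 2 * b = t + k - l)
    (hc : 2 * c = t - k + l) (hd : 2 * d = t - k - l) :
    Even (t + r + s) ∧ Even (t + r - s) ∧
    (∃ lam1 lam2 : ℤ, 2 * lam1 = t + r + s ∧ 2 * lam2 = t - r - s ∧
      lam1 + lam2 = Matrix.trace !![a, b; c, d] ∧
      lam1 * lam2 = Matrix.det !![a, b; c, d]) ∧
    (∃ lam1 lam2 : ℤ, 2 * lam1 = t + r - s ∧ 2 * lam2 = t - r + s ∧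
      lam1 + lam2 = Matrix.trace !![b, a; d, c] ∧
      lam1 * lam2 = Matrix.det !![b, a; d, c]) := by
  -- parity: in ZMod 2, x^2 = x, so r + s = t
  have hz : ((r : ZMod 2) + s) = (t : ZMod 2) := by
    have h2 : ∀ x : ZMod 2, x ^ 2 = x := fun x => ZMod.pow_card x
    have := congrArg (Int.cast : ℤ → ZMod 2) hpy
    push_cast at this
    rwa [h2, h2, h2] at this
  have h2z : (2 : ZMod 2) = 0 := by decide
  have heven : Even (t + r + s) := by
    have hc0 : ((t + r + s : ℤ) : ZMod 2) = 0 := by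
      push_cast
      rw [add_assoc, hz, ← two_mul, h2z, zero_mul]
    have := (ZMod.intCast_zmod_eq_zero_iff_dvd (t + r + s) 2).mp hc0
    exact even_iff_two_dvd.mpr (by exact_mod_cast this)
  have heven2 : Even (t + r - s) := by
    have hc0 : ((t + r - s : ℤ) : ZMod 2) = 0 := by
      push_cast
      have hs : (s : ZMod 2) = -s := by linear_combination (s : ZMod 2) * h2z
      rw [sub_eq_add_neg, ← hs, add_assoc, hz, ← two_mul, h2z, zero_mul]
    have := (ZMod.intCast_zmod_eq_zero_iff_dvd (t + r - s) 2).mp hc0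
    exact even_iff_two_dvd.mpr (by exact_mod_cast this)
  obtain ⟨e, he⟩ := heven
  obtain ⟨f, hf⟩ := heven2
  refine ⟨⟨e, he⟩, ⟨f, hf⟩, ⟨e, t - e, by omega, by omega, ?_, ?_⟩,
    ⟨f, t - f, by omega, by omega, ?_, ?_⟩⟩
  · simp [Matrix.trace_fin_two]; omega
  · simp [Matrix.det_fin_two_of]
    have he' : 2 * e = t + r + s := by omega
    have h4 : (4:ℤ) * (e * (t - e)) = 4 * (a * d - b * c) := by
      linear_combination (t - 2*e - r - s) * he' - hpy + 2*hkl - (2*d) * ha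
        - (t + k + l) * hd + (2*c) * hb + (t + k - l) * hc
    exact mul_left_cancel₀ (by norm_num : (4:ℤ) ≠ 0) h4
  · simp [Matrix.trace_fin_two]; omega
  · simp [Matrix.det_fin_two_of]
    have hf' : 2 * f = t + r - s := by omega
    have h4 : (4:ℤ) * (f * (t - f)) = 4 * (b * c - a * d) := by
      linear_combination (t - 2*f - r + s) * hf' - hpy - 2*hkl - (2*c) * hb
        - (t + k - l) * hc + (2*d) * ha + (t + k + l) * hd
    exact mul_left_cancel₀ (by norm_num : (4:ℤ) ≠ 0) h4
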